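/- Let G be a finite group and N a non-trivial normal subgroup of G. Then κ(G) < κ(G/N). -/

import Mathlib

noncomputable def kappa (G : Type*) [Group G] : ℝ :=
  (Nat.card {p : G × G // IsConj p.1 p.2} : ℝ) / (Nat.card G : ℝ) ^ 2

theorem kappa_lt_kappa_quotient (G : Type*) [Group G] [Finite G]
    (N : Subgroup G) [N.Normal] (hN : N ≠ ⊥) :
    kappa G < kappa (G ⧸ N) := by
  classical
  obtain ⟨n, hnN, hn1⟩ : ∃ n ∈ N, n ≠ 1 := by
    by_contra h
    push_neg at h
    exact hN (Subgroup.eq_bot_iff_forall N |>.mpr h)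
  set Q := G ⧸ N
  have mem_of_mk_eq : ∀ (g : G) (q : Q), (g : Q) = q → (q.out)⁻¹ * g ∈ N := by
    intro g q h
    have h2 : ((q.out : G) : Q) = (g : Q) := (Quotient.out_eq q).trans h.symm
    exact QuotientGroup.eq.mp h2
  -- the injection
  let f : {p : G × G // IsConj p.1 p.2} →
      {p : Q × Q // IsConj p.1 p.2} × (N × N) := fun p =>
    ⟨⟨((p.1.1 : Q), (p.1.2 : Q)), (QuotientGroup.mk' N).map_isConj p.2⟩,
      ⟨((p.1.1 : Q).out)⁻¹ * p.1.1, mem_of_mk_eq _ _ rfl⟩,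
      ⟨((p.1.2 : Q).out)⁻¹ * p.1.2, mem_of_mk_eq _ _ rfl⟩⟩
  have hf : Function.Injective f := by
    rintro ⟨⟨g, h⟩, hc⟩ ⟨⟨g', h'⟩, hc'⟩ he
    simp only [f, Prod.mk.injEq, Subtype.mk.injEq, Subtype.ext_iff] at he
    obtain ⟨⟨h1, h2⟩, h3, h4⟩ := he
    have hg : g = g' := by
      have := h3
      rw [h1] at this
      exact mul_left_cancel this
    have hh : h = h' := by
      have := h4
      rw [h2] at this
      exact mul_left_cancel this
    simp [hg, hh]
  -- an element not in the range
  have h1N : ((1 : Q).out)⁻¹ * (1 : G) ∈ N := mem_of_mk_eq 1 1 rfl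
  have hnN' : ((1 : Q).out)⁻¹ * n ∈ N := mem_of_mk_eq n 1 (by
    rwa [← QuotientGroup.eq_one_iff] at hnN)
  set b : {p : Q × Q // IsConj p.1 p.2} × (N × N) :=
    ⟨⟨(1, 1), IsConj.refl 1⟩, ⟨_, h1N⟩, ⟨_, hnN'⟩⟩
  have hb : b ∉ Set.range f := by
    rintro ⟨⟨⟨g, h⟩, hc⟩, he⟩
    simp only [f, b, Prod.mk.injEq, Subtype.mk.injEq, Subtype.ext_iff] at he
    obtain ⟨⟨h1, h2⟩, h3, h4⟩ := he
    rw [h1] at h3; rw [h2] at h4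
    have hg : g = 1 := mul_left_cancel h3
    have hh : h = n := mul_left_cancel h4
    rw [hg, hh] at hc
    exact hn1 (isConj_one_right.mp hc)
  have : Finite Q := Quotient.finite _
  have hcard : Nat.card {p : G × G // IsConj p.1 p.2} <
      Nat.card {p : Q × Q // IsConj p.1 p.2} * (Nat.card N * Nat.card N) := by
    have : Fintype {p : G × G // IsConj p.1 p.2} := Fintype.ofFinite _
    have : Fintype {p : Q × Q // IsConj p.1 p.2} := Fintype.ofFinite _
    have : Fintype N := Fintype.ofFinite _
    have hlt := Fintype.card_lt_of_injective_of_notMem (α := {p : G × G // IsConj p.1 p.2})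
      (β := {p : Q × Q // IsConj p.1 p.2} × (N × N)) f hf hb
    rw [Fintype.card_prod, Fintype.card_prod] at hlt
    rw [Nat.card_eq_fintype_card, Nat.card_eq_fintype_card, Nat.card_eq_fintype_card]
    exact hlt
  have hG : Nat.card G = Nat.card Q * Nat.card N :=
    Subgroup.card_eq_card_quotient_mul_card_subgroup N
  have hQpos : 0 < (Nat.card Q : ℝ) := by
    exact_mod_cast Nat.card_pos
  have hNpos : 0 < (Nat.card N : ℝ) := by
    exact_mod_cast Nat.card_pos
  have hA : (Nat.card {p : G × G // IsConj p.1 p.2} : ℝ) <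
      (Nat.card {p : Q × Q // IsConj p.1 p.2} : ℝ) * (Nat.card N * Nat.card N) := by
    exact_mod_cast hcard
  unfold kappa
  rw [hG]
  push_cast
  rw [div_lt_div_iff₀ (by positivity) (by positivity)]
  nlinarith [hA, sq_nonneg ((Nat.card Q : ℝ)), hQpos, hNpos,
    mul_pos (mul_pos hQpos hQpos) (mul_pos hNpos hNpos)]
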